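/- Let w1, w2, w3 be differentiable functions satisfying the generalized Darboux–Halphen system w1' = -w2w3 + w1(w2+w3) + τ², w2' = -w3w1 + w2(w3+w1) + τ², w3' = -w1w2 + w3(w1+w2) + τ², with τ² = 0 (i.e., α = β = γ = 0). Then y := 2(w1 + w2 + w3) satisfies the Chazy III equation y''' - 2yy'' + 3(y')^2 = 0. -/

import Mathlib

theorem darboux_halphen_to_chazyIII (w1 w2 w3 : ℂ → ℂ)
    (h1 : ContDiff ℂ ⊤ w1) (h2 : ContDiff ℂ ⊤ w2) (h3 : ContDiff ℂ ⊤ w3)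
    (hw1 : ∀ z, deriv w1 z = -(w2 z * w3 z) + w1 z * (w2 z + w3 z))
    (hw2 : ∀ z, deriv w2 z = -(w3 z * w1 z) + w2 z * (w3 z + w1 z))
    (hw3 : ∀ z, deriv w3 z = -(w1 z * w2 z) + w3 z * (w1 z + w2 z)) :
    ∀ z, deriv^[3] (fun t => 2 * (w1 t + w2 t + w3 t)) z
      - 2 * (2 * (w1 z + w2 z + w3 z)) * deriv^[2] (fun t => 2 * (w1 t + w2 t + w3 t)) z
      + 3 * (deriv (fun t => 2 * (w1 t + w2 t + w3 t)) z) ^ 2 = 0 := by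
  have d1 : Differentiable ℂ w1 := h1.differentiable (by simp)
  have d2 : Differentiable ℂ w2 := h2.differentiable (by simp)
  have d3 : Differentiable ℂ w3 := h3.differentiable (by simp)
  -- first derivative
  have hy1 : deriv (fun t => 2 * (w1 t + w2 t + w3 t))
      = fun z => 2 * (w1 z * w2 z + w2 z * w3 z + w3 z * w1 z) := by
    funext z
    rw [deriv_const_mul (d := fun t => w1 t + w2 t + w3 t) _ (((d1.add d2).add d3) z),
      deriv_fun_add (f := fun t => w1 t + w2 t) ((d1.add d2) z) (d3 z), deriv_fun_add (d1 z) (d2 z),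
      hw1 z, hw2 z, hw3 z]
    ring
  -- second derivative
  have hy2 : deriv^[2] (fun t => 2 * (w1 t + w2 t + w3 t))
      = fun z => 12 * (w1 z * w2 z * w3 z) := by
    funext z
    show deriv (deriv (fun t => 2 * (w1 t + w2 t + w3 t))) z = _
    rw [hy1]
    have hd : Differentiable ℂ fun z => w1 z * w2 z + w2 z * w3 z + w3 z * w1 z :=
      ((d1.mul d2).add (d2.mul d3)).add (d3.mul d1)
    rw [deriv_const_mul _ (hd z),
      deriv_fun_add (f := fun z => w1 z * w2 z + w2 z * w3 z) (g := fun z => w3 z * w1 z) (((d1.mul d2).add (d2.mul d3)) z) ((d3.mul d1) z),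
      deriv_fun_add (f := fun z => w1 z * w2 z) (g := fun z => w2 z * w3 z) ((d1.mul d2) z) ((d2.mul d3) z),
      deriv_fun_mul (d1 z) (d2 z), deriv_fun_mul (d2 z) (d3 z), deriv_fun_mul (d3 z) (d1 z),
      hw1 z, hw2 z, hw3 z]
    ring
  -- third derivative
  have hy3 : deriv^[3] (fun t => 2 * (w1 t + w2 t + w3 t))
      = fun z => 24 * (w1 z * w2 z * w3 z) * (w1 z + w2 z + w3 z)
        - 12 * ((w1 z * w2 z) ^ 2 + (w2 z * w3 z) ^ 2 + (w3 z * w1 z) ^ 2) := by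
    funext z
    show deriv (deriv^[2] (fun t => 2 * (w1 t + w2 t + w3 t))) z = _
    rw [hy2]
    rw [deriv_const_mul (d := fun z => w1 z * w2 z * w3 z) _ (((d1.mul d2).mul d3) z),
      deriv_fun_mul (c := fun z => w1 z * w2 z) ((d1.mul d2) z) (d3 z), deriv_fun_mul (d1 z) (d2 z),
      hw1 z, hw2 z, hw3 z]
    ring
  intro z
  rw [hy1, hy2, hy3]
  ring
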